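/- Let n ≤ d, suppose the H-action on ℝ^d is linear and Φ : ℝ^d → ℝ^n is homogeneous of degree p > 0 (so Φ(δx) = δ^p Φ(x)), and suppose η is an admissible vector for the mock metaplectic representation U of G = ℝ^n ⋊ H. Then for every δ > 0 the dilated vector √(δ^{np−d}) η^δ, where η^δ(x) = η(δ⁻¹x), is also admissible for U. -/

import Mathlib

open MeasureTheory Real
open scoped ENNReal

/-- `η` is an admissible vector for the mock metaplectic representation
`(U_{(a,h)} f)(x) = β(h)^{-1/2} e^{-2πi⟨Φ(x),a⟩} f(h⁻¹.x)` of `G = ℝⁿ ⋊ H` on `L²(ℝᵈ)`,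
where `G` carries the left Haar measure `dg = α(h)⁻¹ da dμH(h)`:
`∫_G |⟨f, U_g η⟩|² dg = ‖f‖²` for every `f ∈ L²(ℝᵈ)`. -/
def IsAdmissible (n d : ℕ) {H : Type*} [Group H] [MeasurableSpace H] (μH : Measure H)
    (α β : H → ℝ)
    (σ : H → EuclideanSpace ℝ (Fin d) → EuclideanSpace ℝ (Fin d))
    (Φ : EuclideanSpace ℝ (Fin d) → EuclideanSpace ℝ (Fin n))
    (η : EuclideanSpace ℝ (Fin d) → ℂ) : Prop :=
  MemLp η 2 volume ∧
  ∀ f : EuclideanSpace ℝ (Fin d) → ℂ, MemLp f 2 volume →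
    (∫⁻ h, (∫⁻ a, ‖(∫ x, f x * (starRingEnd ℂ)
        ((Real.sqrt (β h) : ℂ)⁻¹ *
          Complex.exp (-(2 * π * Complex.I) * ((inner ℝ (Φ x) a : ℝ) : ℂ)) *
          η (σ h⁻¹ x)) ∂volume)‖₊ ^ 2
        ∂(volume : Measure (EuclideanSpace ℝ (Fin n)))) * ENNReal.ofReal (α h)⁻¹ ∂μH)
      = ∫⁻ x, ‖f x‖₊ ^ 2 ∂volume

noncomputable def smulEquiv (m : ℕ) {r : ℝ} (hr : r ≠ 0) :
    EuclideanSpace ℝ (Fin m) ≃ᵐ EuclideanSpace ℝ (Fin m) :=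
  (Homeomorph.smulOfNeZero r hr).toMeasurableEquiv

lemma smulEquiv_coe (m : ℕ) {r : ℝ} (hr : r ≠ 0) :
    ⇑(smulEquiv m hr) = (r • · : EuclideanSpace ℝ (Fin m) → _) := rfl

lemma map_smul_volume (m : ℕ) {r : ℝ} (hr : r ≠ 0) :
    Measure.map (smulEquiv m hr) (volume : Measure (EuclideanSpace ℝ (Fin m)))
      = ENNReal.ofReal |(r ^ m)⁻¹| • volume := by
  rw [smulEquiv_coe m hr, Measure.map_addHaar_smul volume hr, finrank_euclideanSpace_fin]

lemma lintegral_comp_smul_eucl (m : ℕ) (g : EuclideanSpace ℝ (Fin m) → ℝ≥0∞) {r : ℝ}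
    (hr : r ≠ 0) :
    ∫⁻ x, g (r • x) ∂(volume : Measure (EuclideanSpace ℝ (Fin m)))
      = ENNReal.ofReal |(r ^ m)⁻¹| * ∫⁻ x, g x ∂volume := by
  have := lintegral_map_equiv (μ := (volume : Measure (EuclideanSpace ℝ (Fin m)))) g
    (smulEquiv m hr)
  rw [map_smul_volume m hr, lintegral_smul_measure] at this
  exact this.symm

lemma memLp_comp_smul (m : ℕ) {F : EuclideanSpace ℝ (Fin m) → ℂ}
    (hF : MemLp F 2 volume) {r : ℝ} (hr : r ≠ 0) :
    MemLp (fun x => F (r • x)) 2 volume := by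
  have h1 : MemLp F 2 (Measure.map (smulEquiv m hr) volume) := by
    rw [map_smul_volume m hr]
    exact hF.smul_measure ENNReal.ofReal_ne_top
  exact ((smulEquiv m hr).memLp_map_measure_iff).1 h1

lemma nnnorm_const_mul_sq (r : ℝ) (hr : 0 ≤ r) (z : ℂ) :
    ((‖(r : ℂ) * z‖₊ : ℝ≥0∞)) ^ 2 = ENNReal.ofReal (r ^ 2) * (‖z‖₊ : ℝ≥0∞) ^ 2 := by
  rw [nnnorm_mul, ENNReal.coe_mul, mul_pow]
  congr 1
  rw [← ENNReal.coe_pow, ← ENNReal.ofReal_coe_nnreal]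
  congr 1
  simp only [NNReal.coe_pow, coe_nnnorm, Complex.norm_real, Real.norm_eq_abs,
    abs_of_nonneg hr]


/-- If the `H`-action on `ℝᵈ` is linear, `Φ` is homogeneous of degree
`p > 0`, and `η` is an admissible vector for the mock metaplectic representation, then for
every `δ > 0` the dilated vector `√(δ^{np-d}) η^δ`, with `η^δ(x) = η(δ⁻¹x)`, is admissible. -/
theorem stmt_11
    (n d : ℕ) (hnd : n ≤ d) (H : Type*) [Group H] [MeasurableSpace H] [MeasurableMul H]
    (μH : Measure H) [SigmaFinite μH] [μH.IsMulLeftInvariant]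
    (ρ : H →* (EuclideanSpace ℝ (Fin n) ≃L[ℝ] EuclideanSpace ℝ (Fin n)))
    (α : H → ℝ) (hα_meas : Measurable α)
    (hα : ∀ h, α h = |LinearMap.det ((ρ h⁻¹).toLinearEquiv.toLinearMap)|)
    -- the `H`-action on `ℝᵈ` is linear
    (σ : H →* (EuclideanSpace ℝ (Fin d) ≃L[ℝ] EuclideanSpace ℝ (Fin d)))
    (hσ_meas : Measurable fun p : H × EuclideanSpace ℝ (Fin d) => σ p.1 p.2)
    (β : H → ℝ) (hβ_pos : ∀ h, 0 < β h) (hβ_meas : Measurable β)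
    (hβ : ∀ (h : H) (E : Set (EuclideanSpace ℝ (Fin d))), MeasurableSet E →
      volume ((σ h⁻¹) ⁻¹' E) = ENNReal.ofReal (β h) * volume E)
    (Φ : EuclideanSpace ℝ (Fin d) → EuclideanSpace ℝ (Fin n))
    (hΦ : ContDiff ℝ 1 Φ)
    (hint : ∀ h x, Φ (σ h x) = ρ h (Φ x))
    -- `Φ` is homogeneous of degree `p > 0`
    (p : ℝ) (hp : 0 < p)
    (hhom : ∀ δ : ℝ, 0 < δ → ∀ x, Φ (δ • x) = (δ ^ p) • Φ x)
    -- `η` is admissible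
    (η : EuclideanSpace ℝ (Fin d) → ℂ)
    (hη : IsAdmissible n d μH α β (fun h x => σ h x) Φ η) :
    ∀ δ : ℝ, 0 < δ →
      IsAdmissible n d μH α β (fun h x => σ h x) Φ
        (fun x => (Real.sqrt (δ ^ ((n : ℝ) * p - d)) : ℂ) * η (δ⁻¹ • x)) := by
  intro δ hδ
  have hδne : δ ≠ 0 := hδ.ne'
  have hδp : (0:ℝ) < δ ^ p := Real.rpow_pos_of_pos hδ p
  set c : ℝ := Real.sqrt (δ ^ ((n : ℝ) * p - d)) with hc
  have hc0 : 0 ≤ c := Real.sqrt_nonneg _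
  constructor
  · exact (memLp_comp_smul d hη.1 (inv_ne_zero hδne)).const_mul _
  · intro f hf
    have hg : MemLp (fun y => f (δ • y)) 2 volume := memLp_comp_smul d hf hδne
    have hηg := hη.2 (fun y => f (δ • y)) hg
    beta_reduce at hηg
    beta_reduce
    -- the kernel associated with g and η
    set K : H → EuclideanSpace ℝ (Fin n) → ℂ := fun h b =>
      ∫ x, f (δ • x) * (starRingEnd ℂ) ((Real.sqrt (β h) : ℂ)⁻¹ *
        Complex.exp (-(2 * π * Complex.I) * ((inner ℝ (Φ x) b : ℝ) : ℂ)) *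
        η (σ h⁻¹ x)) ∂volume with hK
    have key : ∀ (h : H) (a : EuclideanSpace ℝ (Fin n)),
        (∫ x, f x * (starRingEnd ℂ)
          ((Real.sqrt (β h) : ℂ)⁻¹ *
            Complex.exp (-(2 * π * Complex.I) * ((inner ℝ (Φ x) a : ℝ) : ℂ)) *
            ((c : ℂ) * η (δ⁻¹ • (σ h⁻¹ x)))) ∂volume)
          = ((c * δ ^ d : ℝ) : ℂ) * K h ((δ ^ p) • a) := by
      intro h a
      have hpt : ∀ y : EuclideanSpace ℝ (Fin d),
          f (δ • y) * (starRingEnd ℂ)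
            ((Real.sqrt (β h) : ℂ)⁻¹ *
              Complex.exp (-(2 * π * Complex.I) * ((inner ℝ (Φ (δ • y)) a : ℝ) : ℂ)) *
              ((c : ℂ) * η (δ⁻¹ • (σ h⁻¹ (δ • y)))))
          = (c : ℂ) * (f (δ • y) * (starRingEnd ℂ)
            ((Real.sqrt (β h) : ℂ)⁻¹ *
              Complex.exp (-(2 * π * Complex.I) * ((inner ℝ (Φ y) ((δ ^ p) • a) : ℝ) : ℂ)) *
              η (σ h⁻¹ y))) := by
        intro y
        have h2 : (inner ℝ (Φ (δ • y)) a : ℝ) = (inner ℝ (Φ y) ((δ ^ p) • a) : ℝ) := by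
          rw [hhom δ hδ y, real_inner_smul_left, ← real_inner_smul_right]
        have h3 : δ⁻¹ • ((σ h⁻¹) (δ • y)) = (σ h⁻¹) y := by
          rw [_root_.map_smul, inv_smul_smul₀ hδne]
        rw [h2, h3]
        simp only [map_mul, Complex.conj_ofReal]
        ring
      have hcs := MeasureTheory.Measure.integral_comp_smul
        (volume : Measure (EuclideanSpace ℝ (Fin d)))
        (fun x => f x * (starRingEnd ℂ)
          ((Real.sqrt (β h) : ℂ)⁻¹ *
            Complex.exp (-(2 * π * Complex.I) * ((inner ℝ (Φ x) a : ℝ) : ℂ)) *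
            ((c : ℂ) * η (δ⁻¹ • (σ h⁻¹ x))))) δ
      rw [finrank_euclideanSpace_fin, abs_of_pos (inv_pos.2 (by positivity))] at hcs
      beta_reduce at hcs
      have hrw : (∫ x : EuclideanSpace ℝ (Fin d),
          f (δ • x) * (starRingEnd ℂ)
            ((Real.sqrt (β h) : ℂ)⁻¹ *
              Complex.exp (-(2 * π * Complex.I) * ((inner ℝ (Φ (δ • x)) a : ℝ) : ℂ)) *
              ((c : ℂ) * η (δ⁻¹ • (σ h⁻¹ (δ • x))))) ∂volume)
          = (c : ℂ) * K h ((δ ^ p) • a) := by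
        rw [hK]
        rw [← integral_const_mul]
        exact integral_congr_ae (Filter.Eventually.of_forall hpt)
      rw [hrw] at hcs
      have hne : ((δ:ℝ) ^ d)⁻¹ ≠ 0 := by positivity
      calc (∫ x, f x * (starRingEnd ℂ)
          ((Real.sqrt (β h) : ℂ)⁻¹ *
            Complex.exp (-(2 * π * Complex.I) * ((inner ℝ (Φ x) a : ℝ) : ℂ)) *
            ((c : ℂ) * η (δ⁻¹ • (σ h⁻¹ x)))) ∂volume)
          = (δ ^ d : ℝ) • (((δ:ℝ) ^ d)⁻¹ • (∫ x, f x * (starRingEnd ℂ)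
            ((Real.sqrt (β h) : ℂ)⁻¹ *
              Complex.exp (-(2 * π * Complex.I) * ((inner ℝ (Φ x) a : ℝ) : ℂ)) *
              ((c : ℂ) * η (δ⁻¹ • (σ h⁻¹ x)))) ∂volume)) := by
            rw [smul_smul, mul_inv_cancel₀ (by positivity), one_smul]
        _ = (δ ^ d : ℝ) • ((c : ℂ) * K h ((δ ^ p) • a)) := by rw [← hcs]
        _ = ((c * δ ^ d : ℝ) : ℂ) * K h ((δ ^ p) • a) := by
            rw [Complex.real_smul]
            push_cast
            ring
    -- constants
    set C1 : ℝ≥0∞ := ENNReal.ofReal ((c * δ ^ d) ^ 2) with hC1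
    set C2 : ℝ≥0∞ := ENNReal.ofReal |((δ ^ p) ^ n)⁻¹| with hC2
    have hC1top : C1 ≠ ⊤ := ENNReal.ofReal_ne_top
    have hC2top : C2 ≠ ⊤ := ENNReal.ofReal_ne_top
    have hconst : C1 * C2 * ENNReal.ofReal |((δ:ℝ) ^ d)⁻¹| = 1 := by
      rw [hC1, hC2, abs_of_pos (by positivity), abs_of_pos (by positivity),
        ← ENNReal.ofReal_mul (by positivity), ← ENNReal.ofReal_mul (by positivity)]
      have hreal : (c * δ ^ d) ^ 2 * ((δ ^ p) ^ n)⁻¹ * ((δ:ℝ) ^ d)⁻¹ = 1 := by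
        have hc2 : c ^ 2 = δ ^ ((n : ℝ) * p - d) := Real.sq_sqrt (Real.rpow_nonneg hδ.le _)
        have e1 : (δ:ℝ) ^ (d : ℕ) = δ ^ ((d : ℕ) : ℝ) := (Real.rpow_natCast δ d).symm
        have e2 : ((δ:ℝ) ^ p) ^ (n : ℕ) = δ ^ (p * (n : ℕ)) := by
          rw [Real.rpow_mul hδ.le, Real.rpow_natCast]
        have e3 : (δ ^ ((d : ℕ) : ℝ)) ^ (2 : ℕ) = δ ^ (((d : ℕ) : ℝ) * 2) := by
          rw [show (((d : ℕ) : ℝ) * 2) = ((d : ℕ) : ℝ) * ((2 : ℕ) : ℝ) by norm_num,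
            Real.rpow_mul hδ.le]
          exact (Real.rpow_natCast _ 2).symm
        rw [mul_pow, hc2, e1, e2, e3, ← Real.rpow_neg hδ.le, ← Real.rpow_neg hδ.le,
          ← Real.rpow_add hδ, ← Real.rpow_add hδ, ← Real.rpow_add hδ]
        rw [show (n : ℝ) * p - d + (d : ℕ) * 2 + -(p * (n : ℕ)) + -((d : ℕ) : ℝ) = 0 by
          push_cast; ring]
        · exact Real.rpow_zero δ
        all_goals norm_num
      rw [hreal, ENNReal.ofReal_one]
      
    calc (∫⁻ h, (∫⁻ a, (‖(∫ x, f x * (starRingEnd ℂ)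
          ((Real.sqrt (β h) : ℂ)⁻¹ *
            Complex.exp (-(2 * π * Complex.I) * ((inner ℝ (Φ x) a : ℝ) : ℂ)) *
            ((c : ℂ) * η (δ⁻¹ • (σ h⁻¹ x)))) ∂volume)‖₊ : ℝ≥0∞) ^ 2
          ∂(volume : Measure (EuclideanSpace ℝ (Fin n))))
          * ENNReal.ofReal (α h)⁻¹ ∂μH)
        = ∫⁻ h, ((C1 * C2) * ((∫⁻ b, (‖K h b‖₊ : ℝ≥0∞) ^ 2
            ∂(volume : Measure (EuclideanSpace ℝ (Fin n))))
            * ENNReal.ofReal (α h)⁻¹)) ∂μH := by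
          refine lintegral_congr fun h => ?_
          have : (∫⁻ a, (‖(∫ x, f x * (starRingEnd ℂ)
              ((Real.sqrt (β h) : ℂ)⁻¹ *
                Complex.exp (-(2 * π * Complex.I) * ((inner ℝ (Φ x) a : ℝ) : ℂ)) *
                ((c : ℂ) * η (δ⁻¹ • (σ h⁻¹ x)))) ∂volume)‖₊ : ℝ≥0∞) ^ 2
              ∂(volume : Measure (EuclideanSpace ℝ (Fin n))))
              = (C1 * C2) * ∫⁻ b, (‖K h b‖₊ : ℝ≥0∞) ^ 2 ∂volume := by
            calc (∫⁻ a, (‖(∫ x, f x * (starRingEnd ℂ)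
                ((Real.sqrt (β h) : ℂ)⁻¹ *
                  Complex.exp (-(2 * π * Complex.I) * ((inner ℝ (Φ x) a : ℝ) : ℂ)) *
                  ((c : ℂ) * η (δ⁻¹ • (σ h⁻¹ x)))) ∂volume)‖₊ : ℝ≥0∞) ^ 2 ∂volume)
                = ∫⁻ a, C1 * (‖K h ((δ ^ p) • a)‖₊ : ℝ≥0∞) ^ 2 ∂volume := by
                  refine lintegral_congr fun a => ?_
                  rw [key h a, nnnorm_const_mul_sq _ (by positivity), hC1]
              _ = C1 * ∫⁻ a, (‖K h ((δ ^ p) • a)‖₊ : ℝ≥0∞) ^ 2 ∂volume :=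
                  lintegral_const_mul' _ _ hC1top
              _ = C1 * (C2 * ∫⁻ b, (‖K h b‖₊ : ℝ≥0∞) ^ 2 ∂volume) := by
                  rw [lintegral_comp_smul_eucl n (fun b => (‖K h b‖₊ : ℝ≥0∞) ^ 2) hδp.ne',
                    hC2]
              _ = (C1 * C2) * ∫⁻ b, (‖K h b‖₊ : ℝ≥0∞) ^ 2 ∂volume := by rw [mul_assoc]
          rw [this, mul_assoc]
      _ = (C1 * C2) * ∫⁻ h, (∫⁻ b, (‖K h b‖₊ : ℝ≥0∞) ^ 2
            ∂(volume : Measure (EuclideanSpace ℝ (Fin n))))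
            * ENNReal.ofReal (α h)⁻¹ ∂μH :=
          lintegral_const_mul' _ _ (ENNReal.mul_ne_top hC1top hC2top)
      _ = (C1 * C2) * ∫⁻ y, (‖f (δ • y)‖₊ : ℝ≥0∞) ^ 2 ∂volume := by rw [hηg]
      _ = (C1 * C2) * (ENNReal.ofReal |((δ:ℝ) ^ d)⁻¹| * ∫⁻ x, (‖f x‖₊ : ℝ≥0∞) ^ 2 ∂volume) := by
          rw [lintegral_comp_smul_eucl d (fun x => (‖f x‖₊ : ℝ≥0∞) ^ 2) hδne]
      _ = ∫⁻ x, (‖f x‖₊ : ℝ≥0∞) ^ 2 ∂volume := by rw [← mul_assoc, hconst, one_mul]
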